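/- Fix a > 1, λ > 0, d ≥ 1 and u ∈ ℝ. Define the MCP penalty P_λ : [0, ∞) → ℝ by P_λ(θ) = λθ − θ²/(2a) for 0 ≤ θ ≤ aλ and P_λ(θ) = aλ²/2 for θ > aλ. Then the function h(β) = dβ² − 2uβ + 2P_λ(|β|) attains its global minimum over β ∈ ℝ at β* given by: β* = sign(u)·a·(|u| − λ)₊/(ad − 1) when |u| ≤ aλd, and β* = u/d when |u| > aλd. -/

import Mathlib

set_option maxHeartbeats 1000000 in
/-- closed-form MCP thresholding.
Fix `a > 1`, `λ > 0`, `d ≥ 1` and `u ∈ ℝ`.  With the MCP penalty `P_λ`,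
the function `h(β) = dβ² − 2uβ + 2P_λ(|β|)` attains its global minimum over
`β ∈ ℝ` at the point `β*` given by the two-branch MCP update formula. -/
theorem stmt15 (a lam d u : ℝ) (ha : 1 < a) (hlam : 0 < lam) (hd : 1 ≤ d)
    (P : ℝ → ℝ)
    (hP : ∀ θ : ℝ, 0 ≤ θ → P θ =
      if θ ≤ a * lam then lam * θ - θ ^ 2 / (2 * a)
      else a * lam ^ 2 / 2)
    (βstar : ℝ)
    (hβstar : βstar =
      if |u| ≤ a * lam * d then Real.sign u * (a * max (|u| - lam) 0 / (a * d - 1))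
      else u / d) :
    ∀ β : ℝ, d * βstar ^ 2 - 2 * u * βstar + 2 * P |βstar|
      ≤ d * β ^ 2 - 2 * u * β + 2 * P |β| := by
  intro β
  have ha0 : (0:ℝ) < a := by linarith
  have hd0 : (0:ℝ) < d := by linarith
  have had : (0:ℝ) < a * d - 1 := by nlinarith
  have ht : (0:ℝ) ≤ |β| := abs_nonneg β
  have htβ : |β| ^ 2 = β ^ 2 := sq_abs β
  have hub : u * β ≤ |u| * |β| := by
    calc u * β ≤ |u * β| := le_abs_self _
      _ = |u| * |β| := abs_mul u β
  have hw0 : (0:ℝ) ≤ |u| := abs_nonneg u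
  by_cases hc : |u| ≤ a * lam * d
  · rw [if_pos hc] at hβstar
    set m := max (|u| - lam) 0 with hm
    have hm0 : (0:ℝ) ≤ m := le_max_right _ _
    have hm1 : |u| - lam ≤ m := le_max_left _ _
    have hm2 : m ≤ lam * (a * d - 1) := by
      rcases max_cases (|u| - lam) (0:ℝ) with ⟨h1, h2⟩ | ⟨h1, h2⟩ <;>
        rw [hm, h1] <;> nlinarith
    have hq0 : (0:ℝ) ≤ a * m / (a * d - 1) := by positivity
    have habs : |βstar| = a * m / (a * d - 1) := by
      rw [hβstar]
      rcases lt_trichotomy u 0 with h | h | h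
      · rw [Real.sign_of_neg h, abs_mul, abs_neg, abs_one, one_mul, abs_of_nonneg hq0]
      · have hm' : m = 0 := by
          rw [hm, h]
          apply max_eq_right
          simp
          linarith
        simp [h, hm']
      · rw [Real.sign_of_pos h, abs_mul, abs_one, one_mul, abs_of_nonneg hq0]
    have hmul : u * βstar = |u| * (a * m / (a * d - 1)) := by
      rw [hβstar]
      rcases lt_trichotomy u 0 with h | h | h
      · rw [Real.sign_of_neg h, abs_of_neg h]; ring
      · simp [h]
      · rw [Real.sign_of_pos h, abs_of_pos h]; ring
    have hble : |βstar| ≤ a * lam := by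
      rw [habs, div_le_iff₀ had]; nlinarith
    have hPs : P |βstar| = lam * |βstar| - |βstar| ^ 2 / (2 * a) := by
      rw [hP _ (abs_nonneg _), if_pos hble]
    have hsq : βstar ^ 2 = (a * m / (a * d - 1)) ^ 2 := by rw [← sq_abs, habs]
    have hval : d * βstar ^ 2 - 2 * u * βstar + 2 * P |βstar|
        = -(a * m ^ 2 / (a * d - 1)) := by
      rw [hPs, habs, hsq]
      have : 2 * u * βstar = 2 * (|u| * (a * m / (a * d - 1))) := by rw [← hmul]; ring
      rw [this]
      rcases max_cases (|u| - lam) (0:ℝ) with ⟨h1, h2⟩ | ⟨h1, h2⟩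
      · rw [hm, h1]
        have : d * a - 1 ≠ 0 := by rw [mul_comm]; exact had.ne'
        field_simp
        ring
      · rw [hm, h1]
        simp
    rw [hval, hP _ ht]
    by_cases hb : |β| ≤ a * lam
    · rw [if_pos hb, ← sub_nonneg]
      have hexp : d * β ^ 2 - 2 * u * β + 2 * (lam * |β| - |β| ^ 2 / (2 * a))
            - -(a * m ^ 2 / (a * d - 1))
          = ((a * d - 1) * ((a * d - 1) * |β| ^ 2 + 2 * a * lam * |β| - 2 * a * (u * β))
              + a ^ 2 * m ^ 2) / (a * (a * d - 1)) := by
        rw [← htβ]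
        have : d * a - 1 ≠ 0 := by rw [mul_comm]; exact had.ne'
        field_simp
        ring
      rw [hexp]
      apply div_nonneg _ (by positivity)
      nlinarith [sq_nonneg ((a * d - 1) * |β| - a * m),
        mul_nonneg (mul_nonneg (mul_nonneg ha0.le had.le) ht) (sub_nonneg.2 hm1),
        mul_nonneg (mul_nonneg ha0.le had.le) (sub_nonneg.2 hub), htβ]
    · rw [if_neg hb, ← sub_nonneg]
      push_neg at hb
      have hexp : d * β ^ 2 - 2 * u * β + 2 * (a * lam ^ 2 / 2)
            - -(a * m ^ 2 / (a * d - 1))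
          = ((a * d - 1) * (d * |β| ^ 2 - 2 * (u * β) + a * lam ^ 2) + a * m ^ 2)
              / (a * d - 1) := by
        rw [← htβ]
        have : d * a - 1 ≠ 0 := by rw [mul_comm]; exact had.ne'
        field_simp
        ring
      rw [hexp]
      apply div_nonneg _ had.le
      rcases max_cases (|u| - lam) (0:ℝ) with ⟨h1, h2⟩ | ⟨h1, h2⟩
      · rw [hm, h1]
        nlinarith [mul_nonneg ha0.le (sq_nonneg (lam * (a * d - 1) - (|u| - lam))),
          mul_nonneg (mul_nonneg had.le hd0.le) (sq_nonneg (|β| - a * lam)),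
          mul_nonneg (mul_nonneg had.le (by linarith : (0:ℝ) ≤ |β| - a * lam))
            (by nlinarith : (0:ℝ) ≤ a * d * lam - |u|),
          mul_nonneg had.le (sub_nonneg.2 hub), htβ]
      · rw [hm, h1]
        nlinarith [mul_nonneg had.le (mul_nonneg (sub_nonneg.2 hd) (sq_nonneg (|β|))),
          mul_nonneg had.le (sq_nonneg (|β| - lam)),
          mul_nonneg had.le (mul_nonneg (sub_nonneg.2 ha.le) (sq_nonneg lam)),
          mul_nonneg (mul_nonneg had.le ht) (by linarith : (0:ℝ) ≤ lam - |u|),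
          mul_nonneg had.le (sub_nonneg.2 hub)]
  · rw [if_neg hc] at hβstar
    push_neg at hc
    have habs : |βstar| = |u| / d := by rw [hβstar, abs_div, abs_of_pos hd0]
    have hgt : ¬ |βstar| ≤ a * lam := by
      rw [habs]
      push_neg
      rw [lt_div_iff₀ hd0]
      nlinarith
    have hPs : P |βstar| = a * lam ^ 2 / 2 := by rw [hP _ (abs_nonneg _), if_neg hgt]
    have hval : d * βstar ^ 2 - 2 * u * βstar + 2 * P |βstar| = a * lam ^ 2 - u ^ 2 / d := by
      rw [hPs, hβstar]
      field_simp
      ring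
    rw [hval, hP _ ht]
    by_cases hb : |β| ≤ a * lam
    · rw [if_pos hb, ← sub_nonneg]
      have hexp : d * β ^ 2 - 2 * u * β + 2 * (lam * |β| - |β| ^ 2 / (2 * a))
            - (a * lam ^ 2 - u ^ 2 / d)
          = (a * d ^ 2 * |β| ^ 2 - 2 * a * d * (u * β) + 2 * a * d * lam * |β|
              - d * |β| ^ 2 - a ^ 2 * d * lam ^ 2 + a * |u| ^ 2) / (a * d) := by
        rw [← htβ, ← sq_abs u]
        field_simp
        ring
      rw [hexp]
      apply div_nonneg _ (by positivity)
      nlinarith [mul_nonneg (mul_nonneg ha0.le hd0.le) (sub_nonneg.2 hub),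
        mul_nonneg ha0.le (sq_nonneg (a * d * lam - |u|)),
        mul_nonneg (mul_nonneg (mul_nonneg ha0.le hd0.le) (sub_nonneg.2 hb))
          (by nlinarith : (0:ℝ) ≤ |u| - a * d * lam),
        mul_nonneg (mul_nonneg hd0.le had.le) (sq_nonneg (a * lam - |β|)),
        htβ, sq_abs u]
    · rw [if_neg hb, ← sub_nonneg]
      have hexp : d * β ^ 2 - 2 * u * β + 2 * (a * lam ^ 2 / 2)
            - (a * lam ^ 2 - u ^ 2 / d) = (d * β - u) ^ 2 / d := by
        field_simp
        ring
      rw [hexp]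
      positivity
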